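/- Let d ≥ 1, L > 0, t > 0, and let f : ℝ^d → ℝ be convex and L-smooth, i.e. f is differentiable and ‖∇f(x) − ∇f(y)‖ ≤ L‖x − y‖ for all x, y ∈ ℝ^d. Then for every x ∈ ℝ^d one has f(x) ≤ f_t(x) ≤ f(x) + L·t². -/

import Mathlib

open MeasureTheory

/-- The smoothed function `f_t(x) = 𝔼_r [f (x + t r)]`, where `r` is uniform on the closed
unit ball of `ℝ^d`. -/
noncomputable def smoothedFn {d : ℕ} (t : ℝ) (f : EuclideanSpace ℝ (Fin d) → ℝ)
    (x : EuclideanSpace ℝ (Fin d)) : ℝ :=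
  ⨍ r in Metric.closedBall (0 : EuclideanSpace ℝ (Fin d)) 1, f (x + t • r)

section aux

variable {d : ℕ}

local notation "E" => EuclideanSpace ℝ (Fin d)

/-- Chain rule: the 1-d slice `s ↦ f (x + s • v)` has derivative `⟪∇f (x + s₀ • v), v⟫`. -/
lemma slice_hasDerivAt (f : E → ℝ) (hdiff : Differentiable ℝ f) (x v : E) (s₀ : ℝ) :
    HasDerivAt (fun s : ℝ => f (x + s • v))
      (inner ℝ (gradient f (x + s₀ • v)) v : ℝ) s₀ := by
  have hc : HasDerivAt (fun s : ℝ => x + s • v) v s₀ := by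
    simpa using ((hasDerivAt_id s₀).smul_const v).const_add x
  have hf : HasFDerivAt f ((InnerProductSpace.toDual ℝ (EuclideanSpace ℝ (Fin d)))
      (gradient f (x + s₀ • v))) (x + s₀ • v) := (hdiff _).hasGradientAt.hasFDerivAt
  have h := hf.comp_hasDerivAt s₀ hc
  simp at h ⊢
  exact h

/-- Convexity lower bound: `f x + ⟪∇f x, v⟫ ≤ f (x + v)`. -/
lemma convex_lower (f : E → ℝ) (hconv : ConvexOn ℝ Set.univ f)
    (hdiff : Differentiable ℝ f) (x v : E) :
    f x + inner ℝ (gradient f x) v ≤ f (x + v) := by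
  set φ : ℝ → ℝ := fun s => f (x + s • v) with hφ
  have hφconv : ConvexOn ℝ Set.univ φ := by
    have := hconv.comp_affineMap (AffineMap.lineMap x (x + v) : ℝ →ᵃ[ℝ] EuclideanSpace ℝ (Fin d))
    simp only [Set.preimage_univ] at this
    convert this using 1
    any_goals rfl
    funext s
    simp [φ, AffineMap.lineMap_apply, add_comm]
  have hder : HasDerivAt φ (inner ℝ (gradient f x) v : ℝ) 0 := by
    simpa using slice_hasDerivAt f hdiff x v 0
  have := hφconv.le_slope_of_hasDerivAt (Set.mem_univ 0) (Set.mem_univ 1)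
    one_pos hder
  simp only [slope, φ, one_smul, zero_smul, add_zero, sub_zero, div_one, vsub_eq_sub,
    smul_eq_mul, inv_one, one_mul] at this
  linarith

/-- Descent-type upper bound with constant `L` (instead of the optimal `L/2`). -/
lemma descent_upper (f : E → ℝ) (hdiff : Differentiable ℝ f) (L : ℝ) (hL : 0 < L)
    (hsmooth : ∀ x y : E, ‖gradient f x - gradient f y‖ ≤ L * ‖x - y‖) (x v : E) :
    f (x + v) ≤ f x + inner ℝ (gradient f x) v + L * ‖v‖ ^ 2 := by
  set φ : ℝ → ℝ := fun s => f (x + s • v) with hφ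
  have hcont : Continuous φ := by
    apply hdiff.continuous.comp
    exact continuous_const.add (continuous_id.smul continuous_const)
  obtain ⟨c, hc, hceq⟩ := exists_hasDerivAt_eq_slope φ
    (fun s => (inner ℝ (gradient f (x + s • v)) v : ℝ)) one_pos
    hcont.continuousOn
    (fun s _ => slice_hasDerivAt f hdiff x v s)
  have h1 : φ 1 - φ 0 = inner ℝ (gradient f (x + c • v)) v := by
    rw [hceq]; ring
  have h2 : (inner ℝ (gradient f (x + c • v)) v : ℝ)
      ≤ inner ℝ (gradient f x) v + L * ‖v‖ ^ 2 := by
    have hsplit : (inner ℝ (gradient f (x + c • v)) v : ℝ)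
        = inner ℝ (gradient f x) v + inner ℝ (gradient f (x + c • v) - gradient f x) v := by
      rw [inner_sub_left]; ring
    rw [hsplit]
    have hcs : (inner ℝ (gradient f (x + c • v) - gradient f x) v : ℝ)
        ≤ ‖gradient f (x + c • v) - gradient f x‖ * ‖v‖ := real_inner_le_norm _ _
    have hlip : ‖gradient f (x + c • v) - gradient f x‖ ≤ L * (c * ‖v‖) := by
      have := hsmooth (x + c • v) x
      simpa [norm_smul, abs_of_pos hc.1] using this
    have h3 : ‖gradient f (x + c • v) - gradient f x‖ * ‖v‖ ≤ L * (c * ‖v‖) * ‖v‖ :=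
      mul_le_mul_of_nonneg_right hlip (norm_nonneg v)
    have h4 : L * (c * ‖v‖) * ‖v‖ ≤ L * ‖v‖ ^ 2 := by
      nlinarith [sq_nonneg ‖v‖, norm_nonneg v, mul_nonneg hL.le (sq_nonneg ‖v‖), hc.1.le,
        hc.2.le, mul_nonneg (mul_nonneg hL.le (sq_nonneg ‖v‖)) (sub_nonneg.2 hc.2.le)]
    linarith
  have hφ0 : φ 0 = f x := by simp [φ]
  have hφ1 : φ 1 = f (x + v) := by simp [φ]
  linarith

end aux

theorem smoothed_between_smooth {d : ℕ} (hd : 1 ≤ d) (L t : ℝ) (hL : 0 < L) (ht : 0 < t)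
    (f : EuclideanSpace ℝ (Fin d) → ℝ)
    (hconv : ConvexOn ℝ Set.univ f)
    (hdiff : Differentiable ℝ f)
    (hsmooth : ∀ x y : EuclideanSpace ℝ (Fin d),
      ‖gradient f x - gradient f y‖ ≤ L * ‖x - y‖) :
    ∀ x : EuclideanSpace ℝ (Fin d),
      f x ≤ smoothedFn t f x ∧ smoothedFn t f x ≤ f x + L * t ^ 2 := by
  intro x
  haveI : Nonempty (Fin d) := ⟨⟨0, hd⟩⟩
  set B : Set (EuclideanSpace ℝ (Fin d)) :=
    Metric.closedBall (0 : EuclideanSpace ℝ (Fin d)) 1 with hB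
  set g : EuclideanSpace ℝ (Fin d) := gradient f x with hg
  -- basic measure facts
  have hμpos : 0 < volume B := Metric.measure_closedBall_pos volume 0 one_pos
  have hμlt : volume B < ⊤ := MeasureTheory.measure_closedBall_lt_top
  have hμne : (volume B).toReal ≠ 0 := by
    simp [ENNReal.toReal_ne_zero, hμpos.ne', hμlt.ne]
  have hμposR : 0 < (volume B).toReal := ENNReal.toReal_pos hμpos.ne' hμlt.ne
  -- integrability
  have hint : IntegrableOn (fun r => f (x + t • r)) B volume := by
    apply ContinuousOn.integrableOn_compact (isCompact_closedBall _ _)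
    have hcont : Continuous fun r : EuclideanSpace ℝ (Fin d) => f (x + t • r) :=
      hdiff.continuous.comp (continuous_const.add (continuous_id.const_smul t))
    exact hcont.continuousOn
  have hlin_int : IntegrableOn (fun r : EuclideanSpace ℝ (Fin d) =>
      (inner ℝ g (t • r) : ℝ)) B volume := by
    apply ContinuousOn.integrableOn_compact (isCompact_closedBall _ _)
    exact (continuous_const.inner (continuous_id.const_smul t)).continuousOn
  -- the linear term integrates to zero
  have hzero : ∫ r in B, (inner ℝ g (t • r) : ℝ) = 0 := by
    set h : EuclideanSpace ℝ (Fin d) → ℝ := fun r => inner ℝ g (t • r) with hh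
    have hpt : ∀ r : EuclideanSpace ℝ (Fin d),
        B.indicator h (-r) = - B.indicator h r := by
      intro r
      have hBsymm : (-r ∈ B) ↔ (r ∈ B) := by simp [hB]
      by_cases hr : r ∈ B
      · rw [Set.indicator_of_mem (hBsymm.mpr hr), Set.indicator_of_mem hr]
        simp [hh, inner_neg_right]
      · rw [Set.indicator_of_notMem (fun hc => hr (hBsymm.mp hc)),
          Set.indicator_of_notMem hr, neg_zero]
    have hneg : ∫ r, B.indicator h (-r) = ∫ r, B.indicator h r :=
      MeasureTheory.integral_neg_eq_self _ _
    have hflip : ∫ r, B.indicator h r = - ∫ r, B.indicator h r := by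
      conv_lhs => rw [← hneg]
      rw [show (fun r => B.indicator h (-r)) = fun r => - B.indicator h r from funext hpt]
      exact integral_neg _
    have hI : ∫ r, B.indicator h r = 0 := by linarith
    rw [← MeasureTheory.integral_indicator measurableSet_closedBall]
    exact hI
  -- pointwise bounds
  have hlow : ∀ r ∈ B, f x + inner ℝ g (t • r) ≤ f (x + t • r) := fun r _ =>
    convex_lower f hconv hdiff x (t • r)
  have hup : ∀ r ∈ B, f (x + t • r) ≤ f x + inner ℝ g (t • r) + L * t ^ 2 := by
    intro r hr
    have hd2 := descent_upper f hdiff L hL hsmooth x (t • r)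
    have hnorm : ‖t • r‖ ≤ t := by
      rw [norm_smul, Real.norm_eq_abs, abs_of_pos ht]
      have h1 : ‖r‖ ≤ 1 := by simpa [hB] using hr
      nlinarith
    have hsq : L * ‖t • r‖ ^ 2 ≤ L * t ^ 2 := by
      apply mul_le_mul_of_nonneg_left _ hL.le
      nlinarith [norm_nonneg (t • r)]
    linarith
  -- averages
  have havg : smoothedFn t f x = (volume B).toReal⁻¹ * ∫ r in B, f (x + t • r) := by
    rw [smoothedFn, MeasureTheory.setAverage_eq]
    simp [smul_eq_mul]
    rfl
  have hconst_int : IntegrableOn (fun _ : EuclideanSpace ℝ (Fin d) => (f x : ℝ)) B volume :=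
    integrableOn_const hμlt.ne
  have hconst_int2 : IntegrableOn
      (fun _ : EuclideanSpace ℝ (Fin d) => (L * t ^ 2 : ℝ)) B volume :=
    integrableOn_const hμlt.ne
  have hsum_int : IntegrableOn (fun r : EuclideanSpace ℝ (Fin d) =>
      (f x + inner ℝ g (t • r) : ℝ)) B volume := hconst_int.add hlin_int
  constructor
  · -- lower bound
    have hintlow : ∫ r in B, (f x + inner ℝ g (t • r) : ℝ) ≤ ∫ r in B, f (x + t • r) :=
      MeasureTheory.setIntegral_mono_on hsum_int hint
        measurableSet_closedBall hlow
    rw [MeasureTheory.integral_add hconst_int hlin_int, hzero,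
      MeasureTheory.setIntegral_const, smul_eq_mul, add_zero] at hintlow
    rw [havg]
    have hfin : (volume B).toReal⁻¹ * ((volume B).toReal * f x)
        ≤ (volume B).toReal⁻¹ * ∫ r in B, f (x + t • r) :=
      mul_le_mul_of_nonneg_left hintlow (by positivity)
    rwa [inv_mul_cancel_left₀ hμne] at hfin
  · -- upper bound
    have hintup : ∫ r in B, f (x + t • r)
        ≤ ∫ r in B, (f x + inner ℝ g (t • r) + L * t ^ 2 : ℝ) :=
      MeasureTheory.setIntegral_mono_on hint (hsum_int.add hconst_int2)
        measurableSet_closedBall hup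
    rw [MeasureTheory.integral_add hsum_int hconst_int2] at hintup
    rw [MeasureTheory.integral_add hconst_int hlin_int, hzero,
      MeasureTheory.setIntegral_const, MeasureTheory.setIntegral_const, add_zero,
      smul_eq_mul, smul_eq_mul] at hintup
    rw [havg]
    have hfin : (volume B).toReal⁻¹ * ∫ r in B, f (x + t • r)
        ≤ (volume B).toReal⁻¹ * ((volume B).toReal * f x + (volume B).toReal * (L * t ^ 2)) :=
      mul_le_mul_of_nonneg_left hintup (by positivity)
    rw [mul_add, inv_mul_cancel_left₀ hμne, inv_mul_cancel_left₀ hμne] at hfin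
    exact hfin
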